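/- (Local conditional scores are exact for feature-space conditional projective compositions.) Let 𝒜 : ℝⁿ → ℝⁿ be a C¹ diffeomorphism, let p be a probability density on ℝⁿ, and let q(z) = p(𝒜⁻¹(z)) · |det D(𝒜⁻¹)(z)| be the density of the pushforward of p under 𝒜. Let J be a finite conditioner index set, {M_j : j ∈ J} pairwise disjoint subsets of Fin n with B = Fin n \ (⋃_j M_j), and suppose the pushforward conditional family has the product form: for each 𝒥 ⊆ J, q_𝒥(z) = g(z_B) · ∏_{j∈𝒥} f_j(z_{M_j}) · ∏_{j∈J\𝒥} h_j(z_{M_j}) with all factors strictly positive and integrable. Then for every t > 0, every 𝒥 ⊆ J, every z ∈ ℝⁿ, and every i ∈ Fin n: if i ∈ M_j with j ∈ 𝒥 then ∂_i log N_t[q_𝒥](z) = ∂_i log N_t[f_j](z_{M_j}); if i ∈ M_j with j ∉ 𝒥 then ∂_i log N_t[q_𝒥](z) = ∂_i log N_t[h_j](z_{M_j}); and if i ∈ B then ∂_i log N_t[q_𝒥](z) = ∂_i log N_t[g](z_B). -/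

import Mathlib

open Real MeasureTheory

/-- The noising operator in dimension `d = card ι`:
`N_t[p](x) = ∫ p(y) · (2πt²)^(−d/2) · exp(−‖x−y‖²/(2t²)) dy`,
where `‖x−y‖² = ∑ i, (x i − y i)²` is the Euclidean norm squared. -/
noncomputable def noisingPi {ι : Type*} [Fintype ι] (p : (ι → ℝ) → ℝ) (t : ℝ)
    (x : ι → ℝ) : ℝ :=
  ∫ y : ι → ℝ, p y * ((2 * π * t ^ 2) ^ (-(Fintype.card ι : ℝ) / 2) *
    Real.exp (-(∑ i, (x i - y i) ^ 2) / (2 * t ^ 2)))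

namespace CPCAux

variable {ι : Type*} [Fintype ι]

lemma vol_pi_ne_zero : (volume : Measure (ι → ℝ)) ≠ 0 := by
  intro h0
  have h1 : (volume : Measure (ι → ℝ)) Set.univ = 0 := by rw [h0]; rfl
  rw [volume_pi, Measure.pi_univ] at h1
  rw [Finset.prod_eq_zero_iff] at h1
  obtain ⟨i, -, hi⟩ := h1
  simp [Real.volume_univ] at hi

lemma cker_continuous (t : ℝ) (x : ι → ℝ) :
    Continuous fun y : ι → ℝ => ((2 * π * t ^ 2) ^ (-(Fintype.card ι : ℝ) / 2) *
      Real.exp (-(∑ i, (x i - y i) ^ 2) / (2 * t ^ 2))) := by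
  refine continuous_const.mul (Real.continuous_exp.comp ?_)
  refine Continuous.div_const (Continuous.neg ?_) _
  exact continuous_finset_sum _ fun i _ => ((continuous_const.sub (continuous_apply i)).pow 2)

lemma cker_pos {t : ℝ} (ht : 0 < t) (x y : ι → ℝ) :
    0 < (2 * π * t ^ 2) ^ (-(Fintype.card ι : ℝ) / 2) *
      Real.exp (-(∑ i, (x i - y i) ^ 2) / (2 * t ^ 2)) := by
  have h2t : (0:ℝ) < 2 * π * t ^ 2 := by positivity
  exact mul_pos (Real.rpow_pos_of_pos h2t _) (Real.exp_pos _)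

lemma cker_le {t : ℝ} (ht : 0 < t) (x y : ι → ℝ) :
    (2 * π * t ^ 2) ^ (-(Fintype.card ι : ℝ) / 2) *
      Real.exp (-(∑ i, (x i - y i) ^ 2) / (2 * t ^ 2))
      ≤ (2 * π * t ^ 2) ^ (-(Fintype.card ι : ℝ) / 2) := by
  have h2t : (0:ℝ) < 2 * π * t ^ 2 := by positivity
  have h1 : Real.exp (-(∑ i, (x i - y i) ^ 2) / (2 * t ^ 2)) ≤ 1 := by
    rw [Real.exp_le_one_iff]
    apply div_nonpos_of_nonpos_of_nonneg
    · simp only [neg_nonpos]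
      positivity
    · positivity
  exact mul_le_of_le_one_right (Real.rpow_pos_of_pos h2t _).le h1

lemma integrand_integrable {p : (ι → ℝ) → ℝ} (hp : Integrable p) {t : ℝ} (ht : 0 < t)
    (x : ι → ℝ) :
    Integrable (fun y : ι → ℝ => p y * ((2 * π * t ^ 2) ^ (-(Fintype.card ι : ℝ) / 2) *
      Real.exp (-(∑ i, (x i - y i) ^ 2) / (2 * t ^ 2)))) := by
  have h2 : (fun y : ι → ℝ => p y * ((2 * π * t ^ 2) ^ (-(Fintype.card ι : ℝ) / 2) *
      Real.exp (-(∑ i, (x i - y i) ^ 2) / (2 * t ^ 2))))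
      = fun y => ((2 * π * t ^ 2) ^ (-(Fintype.card ι : ℝ) / 2) *
      Real.exp (-(∑ i, (x i - y i) ^ 2) / (2 * t ^ 2))) * p y :=
    funext fun y => mul_comm _ _
  rw [h2]
  refine hp.bdd_mul (c := (2 * π * t ^ 2) ^ (-(Fintype.card ι : ℝ) / 2))
    ((cker_continuous t x).aestronglyMeasurable) (Filter.Eventually.of_forall fun y => ?_)
  rw [Real.norm_eq_abs, abs_of_pos (cker_pos ht x y)]
  exact cker_le ht x y

lemma noisingPi_pos {p : (ι → ℝ) → ℝ} (hp : Integrable p) (hpos : ∀ y, 0 < p y)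
    {t : ℝ} (ht : 0 < t) (x : ι → ℝ) : 0 < noisingPi p t x := by
  rw [noisingPi]
  have hi := integrand_integrable hp ht x
  have hnn : (0 : (ι → ℝ) → ℝ) ≤ fun y => p y * ((2 * π * t ^ 2) ^ (-(Fintype.card ι : ℝ) / 2) *
      Real.exp (-(∑ i, (x i - y i) ^ 2) / (2 * t ^ 2))) :=
    fun y => (mul_pos (hpos y) (cker_pos ht x y)).le
  rw [integral_pos_iff_support_of_nonneg hnn hi]
  have hsupp : Function.support (fun y : ι → ℝ => p y *
      ((2 * π * t ^ 2) ^ (-(Fintype.card ι : ℝ) / 2) *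
      Real.exp (-(∑ i, (x i - y i) ^ 2) / (2 * t ^ 2)))) = Set.univ :=
    Set.eq_univ_of_forall fun y => (mul_pos (hpos y) (cker_pos ht x y)).ne'
  rw [hsupp]
  exact Measure.measure_univ_pos.mpr vol_pi_ne_zero

lemma sq_mul_exp_le {t : ℝ} (ht : 0 < t) (r : ℝ) (hr : 0 ≤ r) :
    r * Real.exp (-(r ^ 2) / (2 * t ^ 2)) ≤ t := by
  have h6 : r / t ≤ Real.exp (r ^ 2 / (2 * t ^ 2)) := by
    have h7 := Real.add_one_le_exp (r ^ 2 / (2 * t ^ 2))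
    have h8 : r / t ≤ r ^ 2 / (2 * t ^ 2) + 1 := by
      rw [div_add' _ _ _ (by positivity), div_le_div_iff₀ ht (by positivity)]
      nlinarith [sq_nonneg (r - t)]
    linarith
  rw [neg_div, Real.exp_neg, ← div_eq_mul_inv, div_le_iff₀ (Real.exp_pos _)]
  calc r = (r / t) * t := (div_mul_cancel₀ r ht.ne').symm
    _ ≤ Real.exp (r ^ 2 / (2 * t ^ 2)) * t := mul_le_mul_of_nonneg_right h6 ht.le
    _ = t * Real.exp (r ^ 2 / (2 * t ^ 2)) := mul_comm _ _

lemma differentiableAt_noisingPi {p : (ι → ℝ) → ℝ} (hp : Integrable p)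
    {t : ℝ} (ht : 0 < t) (x₀ : ι → ℝ) :
    DifferentiableAt ℝ (noisingPi p t) x₀ := by
  classical
  set d : ℝ := (Fintype.card ι : ℝ) with hd
  set c : ℝ := (2 * π * t ^ 2) ^ (-d / 2) with hc
  have hcpos : 0 < c := Real.rpow_pos_of_pos (by positivity) _
  set L : (ι → ℝ) → (ι → ℝ) → ((ι → ℝ) →L[ℝ] ℝ) := fun x y =>
    ∑ i : ι, ((y i - x i) / t ^ 2) • (ContinuousLinearMap.proj i : (ι → ℝ) →L[ℝ] ℝ) with hL
  set F : (ι → ℝ) → (ι → ℝ) → ℝ := fun x y =>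
    p y * (c * Real.exp (-(∑ i, (x i - y i) ^ 2) / (2 * t ^ 2))) with hF
  set F' : (ι → ℝ) → (ι → ℝ) → ((ι → ℝ) →L[ℝ] ℝ) := fun x y => (F x y) • L x y with hF'
  have hDiff : ∀ (y x : ι → ℝ), HasFDerivAt (fun x => F x y) (F' x y) x := by
    intro y x
    have hproj : ∀ i : ι, HasFDerivAt (fun x : ι → ℝ => x i - y i)
        (ContinuousLinearMap.proj i : (ι → ℝ) →L[ℝ] ℝ) x :=
      fun i => (ContinuousLinearMap.proj i : (ι → ℝ) →L[ℝ] ℝ).hasFDerivAt.sub_const (y i)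
    have hsq : ∀ i : ι, HasFDerivAt (fun x : ι → ℝ => (x i - y i) ^ 2)
        ((2 * (x i - y i)) • (ContinuousLinearMap.proj i : (ι → ℝ) →L[ℝ] ℝ)) x := by
      intro i
      have h2 := (hproj i).mul (hproj i)
      have e1 : (fun x : ι → ℝ => (x i - y i) ^ 2)
          = fun x => (x i - y i) * (x i - y i) := funext fun x => sq (x i - y i)
      rw [e1]
      refine h2.congr_fderiv ?_
      ext v
      simp only [ContinuousLinearMap.smul_apply, ContinuousLinearMap.add_apply,
        ContinuousLinearMap.proj_apply, smul_eq_mul]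
      ring
    have hsum : HasFDerivAt (fun x : ι → ℝ => ∑ i, (x i - y i) ^ 2)
        (∑ i, (2 * (x i - y i)) • (ContinuousLinearMap.proj i : (ι → ℝ) →L[ℝ] ℝ)) x :=
      HasFDerivAt.fun_sum fun i _ => hsq i
    have hphi : HasFDerivAt (fun x : ι → ℝ =>
        -(∑ i, (x i - y i) ^ 2) / (2 * t ^ 2)) (L x y) x := by
      have h3 := (hsum.neg).mul_const ((2 * t ^ 2)⁻¹)
      have e2 : (fun x : ι → ℝ => -(∑ i, (x i - y i) ^ 2) / (2 * t ^ 2))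
          = fun x => (-(∑ i, (x i - y i) ^ 2)) * (2 * t ^ 2)⁻¹ :=
        funext fun x => div_eq_mul_inv _ _
      rw [e2]
      refine (h3.congr_fderiv ?_)
      symm
      ext v
      simp only [hL, ContinuousLinearMap.coe_sum', Finset.sum_apply,
        ContinuousLinearMap.smul_apply, ContinuousLinearMap.proj_apply, smul_eq_mul,
        ContinuousLinearMap.coe_smul', Pi.smul_apply, ContinuousLinearMap.neg_apply]
      rw [mul_neg, Finset.mul_sum, ← Finset.sum_neg_distrib]
      refine Finset.sum_congr rfl fun i _ => ?_
      have ht2 : (t:ℝ) ^ 2 ≠ 0 := by positivity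
      field_simp
      ring
    have h4 := (hphi.exp.const_mul c).const_mul (p y)
    have e3 : F' x y = (p y) • (c • ((Real.exp (-(∑ i, (x i - y i) ^ 2) / (2 * t ^ 2))) • L x y)) := by
      rw [hF', smul_smul, smul_smul, hF, mul_assoc]
    rw [e3]
    exact h4
  have hproj_norm : ∀ i : ι, ‖(ContinuousLinearMap.proj i : (ι → ℝ) →L[ℝ] ℝ)‖ ≤ 1 := by
    intro i
    refine ContinuousLinearMap.opNorm_le_bound _ zero_le_one fun v => ?_
    simpa using norm_le_pi_norm v i
  have key : ∀ (y x : ι → ℝ), ‖F' x y‖ ≤ |p y| * (c * (d / t)) := by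
    intro y x
    have ht2 : (0:ℝ) < t ^ 2 := by positivity
    set E : ℝ := Real.exp (-(∑ i, (x i - y i) ^ 2) / (2 * t ^ 2)) with hE
    have hEpos : 0 < E := Real.exp_pos _
    have h5 : ‖L x y‖ ≤ ∑ i, |y i - x i| / t ^ 2 := by
      refine (norm_sum_le _ _).trans ?_
      refine Finset.sum_le_sum fun i _ => ?_
      rw [norm_smul ((y i - x i) / t ^ 2) (ContinuousLinearMap.proj i : (ι → ℝ) →L[ℝ] ℝ)]
      have hb := mul_le_mul_of_nonneg_left (hproj_norm i)
        (norm_nonneg ((y i - x i) / t ^ 2))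
      refine hb.trans (le_of_eq ?_)
      rw [mul_one, Real.norm_eq_abs, abs_div, abs_of_pos ht2]
    have h7 : E * ∑ i, |y i - x i| / t ^ 2 ≤ d / t := by
      rw [Finset.mul_sum]
      calc ∑ i, E * (|y i - x i| / t ^ 2) ≤ ∑ _i : ι, t / t ^ 2 := by
            refine Finset.sum_le_sum fun i _ => ?_
            have hEi : E ≤ Real.exp (-(|y i - x i| ^ 2) / (2 * t ^ 2)) := by
              rw [hE, Real.exp_le_exp, sq_abs]
              have hsq2 : (y i - x i) ^ 2 = (x i - y i) ^ 2 := by ring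
              rw [hsq2]
              have hmono : -(∑ k, (x k - y k) ^ 2) ≤ -((x i - y i) ^ 2) :=
                neg_le_neg (Finset.single_le_sum (f := fun k => (x k - y k) ^ 2)
                  (fun k _ => sq_nonneg _) (Finset.mem_univ i))
              have h2t : (0:ℝ) < 2 * t ^ 2 := by positivity
              exact (div_le_div_iff_of_pos_right h2t).mpr hmono
            calc E * (|y i - x i| / t ^ 2) = (|y i - x i| * E) / t ^ 2 := by ring
              _ ≤ (|y i - x i| * Real.exp (-(|y i - x i| ^ 2) / (2 * t ^ 2))) / t ^ 2 := by
                  gcongr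
              _ ≤ t / t ^ 2 := by
                  gcongr
                  exact sq_mul_exp_le ht _ (abs_nonneg _)
        _ = d / t := by
            rw [Finset.sum_const, Finset.card_univ, nsmul_eq_mul, hd]
            congr 1
            rw [pow_two]
            field_simp
    calc ‖F' x y‖ = ‖F x y‖ * ‖L x y‖ := by
          rw [hF']
          exact norm_smul (F x y) (L x y)
      _ = |p y| * ((c * E) * ‖L x y‖) := by
          rw [hF, Real.norm_eq_abs, abs_mul, abs_mul, abs_of_pos hcpos,
            abs_of_pos hEpos, mul_assoc]
      _ ≤ |p y| * ((c * E) * (∑ i, |y i - x i| / t ^ 2)) := by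
          gcongr
      _ = |p y| * (c * (E * ∑ i, |y i - x i| / t ^ 2)) := by ring
      _ ≤ |p y| * (c * (d / t)) := by
          gcongr
  have hmeas : ∀ x : ι → ℝ, AEStronglyMeasurable (F x) volume := fun x =>
    hp.aestronglyMeasurable.mul ((cker_continuous t x).aestronglyMeasurable)
  have hLcont : Continuous (L x₀) := by
    apply continuous_finset_sum
    intro i _
    exact Continuous.smul (((continuous_apply i).sub continuous_const).div_const _)
      continuous_const
  have hF'meas : AEStronglyMeasurable (F' x₀) volume :=
    (hmeas x₀).smul hLcont.aestronglyMeasurable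
  have hbound_int : Integrable (fun y : ι → ℝ => |p y| * (c * (d / t))) :=
    hp.abs.mul_const _
  have H := hasFDerivAt_integral_of_dominated_of_fderiv_le (F := F) (F' := F')
    (bound := fun y => |p y| * (c * (d / t))) (Metric.ball_mem_nhds x₀ one_pos)
    (Filter.Eventually.of_forall hmeas)
    (integrand_integrable hp ht x₀)
    hF'meas
    (Filter.Eventually.of_forall fun y x _ => key y x)
    hbound_int
    (Filter.Eventually.of_forall fun y x _ => hDiff y x)
  exact H.differentiableAt

lemma noisingPi_split [DecidableEq ι] {t : ℝ} (ht : 0 < t) (S : Finset ι)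
    (F : ({a : ι // a ∈ S} → ℝ) → ℝ) (G : ({a : ι // a ∉ S} → ℝ) → ℝ) (x : ι → ℝ) :
    noisingPi (fun z => F (fun i => z i.1) * G (fun i => z i.1)) t x
      = noisingPi F t (fun i => x i.1) * noisingPi G t (fun i => x i.1) := by
  classical
  have h2t : (0:ℝ) < 2 * π * t ^ 2 := by positivity
  have hcard : (Fintype.card {a : ι // a ∈ S} : ℝ) + (Fintype.card {a : ι // a ∉ S} : ℝ)
      = (Fintype.card ι : ℝ) := by
    have hA : Fintype.card {a : ι // a ∈ S} = S.card := Fintype.card_coe S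
    have hB : Fintype.card {a : ι // a ∉ S} = Sᶜ.card := by
      rw [Fintype.card_subtype]
      congr 1
      ext a
      simp [Finset.mem_compl]
    have h3 : Fintype.card {a : ι // a ∈ S} + Fintype.card {a : ι // a ∉ S}
        = Fintype.card ι := by
      rw [hA, hB, Finset.card_add_card_compl]
    exact_mod_cast h3
  set cS : ℝ := (2 * π * t ^ 2) ^ (-(Fintype.card {a : ι // a ∈ S} : ℝ) / 2) with hcS
  set cT : ℝ := (2 * π * t ^ 2) ^ (-(Fintype.card {a : ι // a ∉ S} : ℝ) / 2) with hcT
  have hker : ∀ y : ι → ℝ,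
      (F (fun i : {a : ι // a ∈ S} => y i.1) * G (fun i : {a : ι // a ∉ S} => y i.1)) *
        ((2 * π * t ^ 2) ^ (-(Fintype.card ι : ℝ) / 2) *
          Real.exp (-(∑ i, (x i - y i) ^ 2) / (2 * t ^ 2)))
      = (F (fun i : {a : ι // a ∈ S} => y i.1) *
          (cS * Real.exp (-(∑ i : {a : ι // a ∈ S}, (x i.1 - y i.1) ^ 2) / (2 * t ^ 2))))
        * (G (fun i : {a : ι // a ∉ S} => y i.1) *
          (cT * Real.exp (-(∑ i : {a : ι // a ∉ S}, (x i.1 - y i.1) ^ 2) / (2 * t ^ 2)))) := by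
    intro y
    have hsum : ∑ i : ι, (x i - y i) ^ 2
        = (∑ i : {a : ι // a ∈ S}, (x i.1 - y i.1) ^ 2)
          + ∑ i : {a : ι // a ∉ S}, (x i.1 - y i.1) ^ 2 := by
      rw [← Finset.sum_add_sum_compl S (fun i => (x i - y i) ^ 2)]
      congr 1
      · exact Finset.sum_subtype S (fun a => Iff.rfl) _
      · exact Finset.sum_subtype Sᶜ (fun a => Finset.mem_compl) _
    have hrpow : (2 * π * t ^ 2) ^ (-(Fintype.card ι : ℝ) / 2) = cS * cT := by
      rw [hcS, hcT, ← Real.rpow_add h2t]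
      congr 1
      rw [← hcard]
      ring
    rw [hsum, hrpow, neg_add, add_div, Real.exp_add]
    ring
  simp only [noisingPi]
  rw [show (∫ y : ι → ℝ, (fun z : ι → ℝ => F (fun i : {a : ι // a ∈ S} => z i.1) *
        G (fun i : {a : ι // a ∉ S} => z i.1)) y *
        ((2 * π * t ^ 2) ^ (-(Fintype.card ι : ℝ) / 2) *
          Real.exp (-(∑ i, (x i - y i) ^ 2) / (2 * t ^ 2))))
      = ∫ y : ι → ℝ, (F (fun i : {a : ι // a ∈ S} => y i.1) *
          (cS * Real.exp (-(∑ i : {a : ι // a ∈ S}, ((fun i : {a : ι // a ∈ S} => x i.1) i - (fun i : {a : ι // a ∈ S} => y i.1) i) ^ 2) / (2 * t ^ 2))))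
        * (G (fun i : {a : ι // a ∉ S} => y i.1) *
          (cT * Real.exp (-(∑ i : {a : ι // a ∉ S}, ((fun i : {a : ι // a ∉ S} => x i.1) i - (fun i : {a : ι // a ∉ S} => y i.1) i) ^ 2) / (2 * t ^ 2))))
      from integral_congr_ae (Filter.EventuallyEq.of_eq (funext fun y => hker y))]
  set Fk : ({a : ι // a ∈ S} → ℝ) → ℝ := fun u => F u *
    (cS * Real.exp (-(∑ i : {a : ι // a ∈ S}, ((fun i : {a : ι // a ∈ S} => x i.1) i - u i) ^ 2) / (2 * t ^ 2))) with hFk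
  set Gk : ({a : ι // a ∉ S} → ℝ) → ℝ := fun v => G v *
    (cT * Real.exp (-(∑ i : {a : ι // a ∉ S}, ((fun i : {a : ι // a ∉ S} => x i.1) i - v i) ^ 2) / (2 * t ^ 2))) with hGk
  have hchg : (∫ y : ι → ℝ, Fk (fun i => y i.1) * Gk (fun i => y i.1))
      = ∫ w : ({a : ι // a ∈ S} → ℝ) × ({a : ι // ¬ a ∈ S} → ℝ), Fk w.1 * Gk w.2 := by
    have hmp := MeasureTheory.volume_preserving_piEquivPiSubtypeProd
      (fun _ : ι => ℝ) (fun a => a ∈ S)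
    have h4 := hmp.integral_comp' (fun w => Fk w.1 * Gk w.2)
    rw [Subsingleton.elim (Finset.Subtype.fintype S) (Subtype.fintype fun a : ι => a ∈ S)]
    exact h4
  rw [hchg, Measure.volume_eq_prod, integral_prod_mul]

lemma integrable_of_prod_factor [DecidableEq ι] (S : Finset ι)
    {F : ({a : ι // a ∈ S} → ℝ) → ℝ} {G : ({a : ι // a ∉ S} → ℝ) → ℝ}
    {Q : (ι → ℝ) → ℝ} (hQ : ∀ z, Q z = F (fun i => z i.1) * G (fun i => z i.1))
    (hQint : Integrable Q) (hFne : ∀ u, F u ≠ 0) : Integrable G := by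
  classical
  set e := MeasurableEquiv.piEquivPiSubtypeProd (fun _ : ι => ℝ) (fun a => a ∈ S) with he
  have hmp := MeasureTheory.volume_preserving_piEquivPiSubtypeProd
    (fun _ : ι => ℝ) (fun a => a ∈ S)
  have hprod : Integrable (fun w : ({a : ι // a ∈ S} → ℝ) × ({a : ι // ¬ a ∈ S} → ℝ) =>
      F w.1 * G w.2) := by
    have h5 : Integrable ((fun w : ({a : ι // a ∈ S} → ℝ) × ({a : ι // ¬ a ∈ S} → ℝ) =>
        F w.1 * G w.2) ∘ ⇑e) volume := by
      have heq : (fun w : ({a : ι // a ∈ S} → ℝ) × ({a : ι // ¬ a ∈ S} → ℝ) =>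
          F w.1 * G w.2) ∘ ⇑e = Q := funext fun z => (hQ z).symm
      rw [heq]
      exact hQint
    have h6 := (hmp.integrable_comp_emb e.measurableEmbedding).mp h5
    rw [Subsingleton.elim (Finset.Subtype.fintype S) (Subtype.fintype fun a : ι => a ∈ S)]
    exact h6
  rw [Measure.volume_eq_prod] at hprod
  have hsec := hprod.prod_right_ae
  have hne : (volume : Measure ({a : ι // a ∈ S} → ℝ)) ≠ 0 := vol_pi_ne_zero
  haveI : (MeasureTheory.ae (volume : Measure ({a : ι // a ∈ S} → ℝ))).NeBot :=
    ae_neBot.mpr hne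
  obtain ⟨u₀, hu⟩ := hsec.exists
  have h2 := hu.const_mul (F u₀)⁻¹
  have h3 : (fun v => (F u₀)⁻¹ * (F u₀ * G v)) = G :=
    funext fun v => inv_mul_cancel_left₀ (hFne u₀) _
  rwa [h3] at h2

lemma core [DecidableEq ι] {t : ℝ} (ht : 0 < t) (S : Finset ι)
    {F : ({a : ι // a ∈ S} → ℝ) → ℝ} {G : ({a : ι // a ∉ S} → ℝ) → ℝ}
    (hFint : Integrable F) (hFpos : ∀ u, 0 < F u)
    (hGint : Integrable G) (hGpos : ∀ v, 0 < G v)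
    {Q : (ι → ℝ) → ℝ} (hQ : ∀ z, Q z = F (fun i => z i.1) * G (fun i => z i.1))
    (z : ι → ℝ) (i : ι) (hi : i ∈ S) :
    fderiv ℝ (fun z' => Real.log (noisingPi Q t z')) z (Pi.single i 1)
      = fderiv ℝ (fun w => Real.log (noisingPi F t w))
          (fun i' : {a : ι // a ∈ S} => z i'.1)
          (Pi.single (⟨i, hi⟩ : {a : ι // a ∈ S}) 1) := by
  classical
  have hNQ : ∀ z' : ι → ℝ, noisingPi Q t z'
      = noisingPi F t (fun i' => z' i'.1) * noisingPi G t (fun i' => z' i'.1) := by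
    intro z'
    rw [show Q = fun z => F (fun i' => z i'.1) * G (fun i' => z i'.1) from funext hQ]
    exact noisingPi_split ht S F G z'
  set LS : (ι → ℝ) →L[ℝ] ({a : ι // a ∈ S} → ℝ) :=
    ContinuousLinearMap.pi (fun i' : {a : ι // a ∈ S} =>
      ContinuousLinearMap.proj i'.1) with hLS
  set LT : (ι → ℝ) →L[ℝ] ({a : ι // a ∉ S} → ℝ) :=
    ContinuousLinearMap.pi (fun i' : {a : ι // a ∉ S} =>
      ContinuousLinearMap.proj i'.1) with hLT
  have hFd : DifferentiableAt ℝ (fun w => Real.log (noisingPi F t w))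
      (fun i' : {a : ι // a ∈ S} => z i'.1) :=
    (differentiableAt_noisingPi hFint ht _).log
      (noisingPi_pos hFint hFpos ht _).ne'
  have hGd : DifferentiableAt ℝ (fun w => Real.log (noisingPi G t w))
      (fun i' : {a : ι // a ∉ S} => z i'.1) :=
    (differentiableAt_noisingPi hGint ht _).log
      (noisingPi_pos hGint hGpos ht _).ne'
  have h1 : HasFDerivAt (fun z' : ι → ℝ =>
      Real.log (noisingPi F t (fun i' : {a : ι // a ∈ S} => z' i'.1)))
      ((fderiv ℝ (fun w => Real.log (noisingPi F t w))
        (fun i' : {a : ι // a ∈ S} => z i'.1)).comp LS) z :=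
    HasFDerivAt.comp (g := fun w => Real.log (noisingPi F t w)) z hFd.hasFDerivAt LS.hasFDerivAt
  have h2 : HasFDerivAt (fun z' : ι → ℝ =>
      Real.log (noisingPi G t (fun i' : {a : ι // a ∉ S} => z' i'.1)))
      ((fderiv ℝ (fun w => Real.log (noisingPi G t w))
        (fun i' : {a : ι // a ∉ S} => z i'.1)).comp LT) z :=
    HasFDerivAt.comp (g := fun w => Real.log (noisingPi G t w)) z hGd.hasFDerivAt LT.hasFDerivAt
  have h3 : HasFDerivAt (fun z' => Real.log (noisingPi Q t z'))
      ((fderiv ℝ (fun w => Real.log (noisingPi F t w))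
        (fun i' : {a : ι // a ∈ S} => z i'.1)).comp LS
        + (fderiv ℝ (fun w => Real.log (noisingPi G t w))
        (fun i' : {a : ι // a ∉ S} => z i'.1)).comp LT) z := by
    have heq : (fun z' : ι → ℝ => Real.log (noisingPi Q t z'))
        = fun z' : ι → ℝ =>
          Real.log (noisingPi F t (fun i' : {a : ι // a ∈ S} => z' i'.1))
          + Real.log (noisingPi G t (fun i' : {a : ι // a ∉ S} => z' i'.1)) := by
      funext z'
      rw [hNQ z', Real.log_mul (noisingPi_pos hFint hFpos ht _).ne'
        (noisingPi_pos hGint hGpos ht _).ne']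
    rw [heq]
    exact h1.add h2
  rw [h3.fderiv]
  have e1 : LS (Pi.single i 1) = Pi.single (⟨i, hi⟩ : {a : ι // a ∈ S}) 1 := by
    ext k
    simp only [hLS, ContinuousLinearMap.pi_apply, ContinuousLinearMap.proj_apply]
    rw [Pi.single_apply, Pi.single_apply]
    simp [Subtype.ext_iff]
  have e2 : LT (Pi.single i 1) = 0 := by
    ext k
    have hk : (k : ι) ≠ i := fun hki => k.2 (hki ▸ hi)
    simp only [hLT, ContinuousLinearMap.pi_apply, ContinuousLinearMap.proj_apply]
    simp [Pi.single_eq_of_ne hk]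
  rw [ContinuousLinearMap.add_apply, ContinuousLinearMap.comp_apply,
    ContinuousLinearMap.comp_apply, e1, e2, map_zero, add_zero]

end CPCAux

open CPCAux in
theorem local_conditional_scores_exact_for_feature_space_cpc
    (n : ℕ) {J : Type*} [Fintype J] [DecidableEq J]
    -- 𝒜 is a C¹ diffeomorphism of ℝⁿ
    (A : (Fin n → ℝ) ≃ (Fin n → ℝ))
    (hA : ContDiff ℝ 1 (⇑A)) (hA' : ContDiff ℝ 1 (⇑A.symm))
    -- the conditional family p_𝒥 of probability densities on ℝⁿ (pixel space)
    (p : Finset J → (Fin n → ℝ) → ℝ)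
    (hp_nonneg : ∀ 𝒥 x, 0 ≤ p 𝒥 x) (hp_int : ∀ 𝒥, Integrable (p 𝒥))
    (hp_mass : ∀ 𝒥, ∫ x, p 𝒥 x = 1)
    -- q_𝒥 is the density of the pushforward of p_𝒥 under 𝒜:
    -- q(z) = p(𝒜⁻¹ z) · |det D(𝒜⁻¹)(z)|
    (q : Finset J → (Fin n → ℝ) → ℝ)
    (hq : ∀ 𝒥 z, q 𝒥 z =
      p 𝒥 (A.symm z) * |LinearMap.det ((fderiv ℝ (⇑A.symm) z) :
        (Fin n → ℝ) →ₗ[ℝ] (Fin n → ℝ))|)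
    -- pairwise disjoint blocks M_j, with background block B
    (M : J → Finset (Fin n))
    (hdisj : ∀ j k : J, j ≠ k → Disjoint (M j) (M k))
    (B : Finset (Fin n)) (hB : B = (Finset.univ.biUnion fun j : J => M j)ᶜ)
    -- the pushforward conditional family has the CPC product form,
    -- with all factors strictly positive and integrable
    (g : ({i // i ∈ B} → ℝ) → ℝ)
    (f h : ∀ j : J, ({i // i ∈ M j} → ℝ) → ℝ)
    (hg_pos : ∀ z, 0 < g z) (hg_int : Integrable g)
    (hf_pos : ∀ j z, 0 < f j z) (hf_int : ∀ j, Integrable (f j))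
    (hh_pos : ∀ j z, 0 < h j z) (hh_int : ∀ j, Integrable (h j))
    (hq_prod : ∀ (𝒥 : Finset J) (z : Fin n → ℝ),
      q 𝒥 z = g (fun i : {a // a ∈ B} => z i.1) *
        (∏ j ∈ 𝒥, f j (fun i : {a // a ∈ M j} => z i.1)) *
        ∏ j ∈ 𝒥ᶜ, h j (fun i : {a // a ∈ M j} => z i.1)) :
    ∀ t > (0 : ℝ), ∀ (𝒥 : Finset J) (z : Fin n → ℝ) (i : Fin n),
      -- case i ∈ M_j with j ∈ 𝒥: the score follows the conditional factor f_j
      (∀ (j : J) (hij : i ∈ M j), j ∈ 𝒥 →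
        fderiv ℝ (fun z' => Real.log (noisingPi (q 𝒥) t z')) z (Pi.single i 1)
          = fderiv ℝ (fun w => Real.log (noisingPi (f j) t w))
              (fun i' : {a // a ∈ M j} => z i'.1)
              (Pi.single (⟨i, hij⟩ : {a // a ∈ M j}) 1))
      -- case i ∈ M_j with j ∉ 𝒥: the score follows the unconditional factor h_j
      ∧ (∀ (j : J) (hij : i ∈ M j), j ∉ 𝒥 →
        fderiv ℝ (fun z' => Real.log (noisingPi (q 𝒥) t z')) z (Pi.single i 1)
          = fderiv ℝ (fun w => Real.log (noisingPi (h j) t w))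
              (fun i' : {a // a ∈ M j} => z i'.1)
              (Pi.single (⟨i, hij⟩ : {a // a ∈ M j}) 1))
      -- case i ∈ B: the score follows the background factor g
      ∧ (∀ hiB : i ∈ B,
        fderiv ℝ (fun z' => Real.log (noisingPi (q 𝒥) t z')) z (Pi.single i 1)
          = fderiv ℝ (fun w => Real.log (noisingPi g t w))
              (fun i' : {a // a ∈ B} => z i'.1)
              (Pi.single (⟨i, hiB⟩ : {a // a ∈ B}) 1)) := by
  classical
  intro t ht 𝒥 z i
  -- q 𝒥 is integrable (change of variables)
  have hqint : Integrable (q 𝒥) := by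
    have hd : ∀ x ∈ (Set.univ : Set (Fin n → ℝ)),
        HasFDerivWithinAt (⇑A.symm) (fderiv ℝ (⇑A.symm) x) Set.univ x := fun x _ =>
      ((hA'.differentiable one_ne_zero) x).hasFDerivAt.hasFDerivWithinAt
    have himg : ⇑A.symm '' Set.univ = Set.univ := by
      rw [Set.image_univ]
      exact A.symm.surjective.range_eq
    have h0 := (integrableOn_image_iff_integrableOn_abs_det_fderiv_smul volume
      MeasurableSet.univ hd (A.symm.injective.injOn) (p 𝒥)).mp
      (by rw [himg, integrableOn_univ]; exact hp_int 𝒥)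
    rw [integrableOn_univ] at h0
    refine h0.congr (Filter.EventuallyEq.of_eq (funext fun zz => ?_))
    rw [hq 𝒥 zz]
    simp only [smul_eq_mul, ContinuousLinearMap.det]
    ring
  -- membership helpers
  have hMB : ∀ (j : J) (a : Fin n), a ∈ M j → a ∉ B := by
    intro j a ha hb
    rw [hB, Finset.mem_compl] at hb
    exact hb (Finset.mem_biUnion.mpr ⟨j, Finset.mem_univ j, ha⟩)
  have hMM : ∀ (j k : J) (a : Fin n), j ≠ k → a ∈ M j → a ∉ M k := by
    intro j k a hjk ha
    exact Finset.disjoint_left.mp (hdisj j k hjk) ha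
  refine ⟨?_, ?_, ?_⟩
  · -- case i ∈ M j, j ∈ 𝒥
    intro j hij hj𝒥
    set S := M j with hS
    set ext : ({a : Fin n // a ∉ S} → ℝ) → (Fin n → ℝ) :=
      fun w a => if hx : a ∉ S then w ⟨a, hx⟩ else 0 with hext
    set G : ({a : Fin n // a ∉ S} → ℝ) → ℝ := fun w =>
      (g (fun i' : {a // a ∈ B} => ext w i'.1) *
        ∏ k ∈ 𝒥.erase j, f k (fun i' : {a // a ∈ M k} => ext w i'.1)) *
      ∏ k ∈ 𝒥ᶜ, h k (fun i' : {a // a ∈ M k} => ext w i'.1) with hG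
    have hmask : ∀ (zz : Fin n → ℝ) (T : Finset (Fin n)), (∀ a ∈ T, a ∉ S) →
        (fun i' : {a // a ∈ T} => ext (fun i'' : {a : Fin n // a ∉ S} => zz i''.1) i'.1)
          = fun i' : {a // a ∈ T} => zz i'.1 := by
      intro zz T hT
      funext i'
      simp only [hext]
      rw [dif_pos (hT i'.1 i'.2)]
    have hQid : ∀ zz : Fin n → ℝ, q 𝒥 zz
        = f j (fun i' : {a // a ∈ S} => zz i'.1)
          * G (fun i' : {a : Fin n // a ∉ S} => zz i'.1) := by
      intro zz
      have hGval : G (fun i' : {a : Fin n // a ∉ S} => zz i'.1)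
          = (g (fun i' : {a // a ∈ B} => zz i'.1) *
              ∏ k ∈ 𝒥.erase j, f k (fun i' : {a // a ∈ M k} => zz i'.1)) *
            ∏ k ∈ 𝒥ᶜ, h k (fun i' : {a // a ∈ M k} => zz i'.1) := by
        simp only [hG]
        congr 1
        · congr 1
          · exact congrArg g (hmask zz B (fun a haB ham => hMB j a ham haB))
          · exact Finset.prod_congr rfl fun k hk =>
              congrArg (f k) (hmask zz (M k)
                (fun a haM => hMM k j a (Finset.ne_of_mem_erase hk) haM))
        · exact Finset.prod_congr rfl fun k hk =>
            congrArg (h k) (hmask zz (M k)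
              (fun a haM => hMM k j a
                (fun hkj => (Finset.mem_compl.mp hk) (hkj ▸ hj𝒥)) haM))
      rw [hq_prod 𝒥 zz, hGval, ← Finset.mul_prod_erase 𝒥
        (fun k => f k (fun i' : {a // a ∈ M k} => zz i'.1)) hj𝒥]
      ring
    have hGpos : ∀ v, 0 < G v := fun v =>
      mul_pos (mul_pos (hg_pos _) (Finset.prod_pos fun k _ => hf_pos _ _))
        (Finset.prod_pos fun k _ => hh_pos _ _)
    have hGint : Integrable G :=
      integrable_of_prod_factor S hQid hqint (fun u => (hf_pos j u).ne')
    exact core ht S (hf_int j) (hf_pos j) hGint hGpos hQid z i hij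
  · -- case i ∈ M j, j ∉ 𝒥
    intro j hij hj𝒥
    have hj' : j ∈ 𝒥ᶜ := Finset.mem_compl.mpr hj𝒥
    set S := M j with hS
    set ext : ({a : Fin n // a ∉ S} → ℝ) → (Fin n → ℝ) :=
      fun w a => if hx : a ∉ S then w ⟨a, hx⟩ else 0 with hext
    set G : ({a : Fin n // a ∉ S} → ℝ) → ℝ := fun w =>
      (g (fun i' : {a // a ∈ B} => ext w i'.1) *
        ∏ k ∈ 𝒥, f k (fun i' : {a // a ∈ M k} => ext w i'.1)) *
      ∏ k ∈ 𝒥ᶜ.erase j, h k (fun i' : {a // a ∈ M k} => ext w i'.1) with hG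
    have hmask : ∀ (zz : Fin n → ℝ) (T : Finset (Fin n)), (∀ a ∈ T, a ∉ S) →
        (fun i' : {a // a ∈ T} => ext (fun i'' : {a : Fin n // a ∉ S} => zz i''.1) i'.1)
          = fun i' : {a // a ∈ T} => zz i'.1 := by
      intro zz T hT
      funext i'
      simp only [hext]
      rw [dif_pos (hT i'.1 i'.2)]
    have hQid : ∀ zz : Fin n → ℝ, q 𝒥 zz
        = h j (fun i' : {a // a ∈ S} => zz i'.1)
          * G (fun i' : {a : Fin n // a ∉ S} => zz i'.1) := by
      intro zz
      have hGval : G (fun i' : {a : Fin n // a ∉ S} => zz i'.1)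
          = (g (fun i' : {a // a ∈ B} => zz i'.1) *
              ∏ k ∈ 𝒥, f k (fun i' : {a // a ∈ M k} => zz i'.1)) *
            ∏ k ∈ 𝒥ᶜ.erase j, h k (fun i' : {a // a ∈ M k} => zz i'.1) := by
        simp only [hG]
        congr 1
        · congr 1
          · exact congrArg g (hmask zz B (fun a haB ham => hMB j a ham haB))
          · exact Finset.prod_congr rfl fun k hk =>
              congrArg (f k) (hmask zz (M k)
                (fun a haM => hMM k j a (fun hkj => hj𝒥 (hkj ▸ hk)) haM))
        · exact Finset.prod_congr rfl fun k hk =>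
            congrArg (h k) (hmask zz (M k)
              (fun a haM => hMM k j a (Finset.ne_of_mem_erase hk) haM))
      rw [hq_prod 𝒥 zz, hGval, ← Finset.mul_prod_erase 𝒥ᶜ
        (fun k => h k (fun i' : {a // a ∈ M k} => zz i'.1)) hj']
      ring
    have hGpos : ∀ v, 0 < G v := fun v =>
      mul_pos (mul_pos (hg_pos _) (Finset.prod_pos fun k _ => hf_pos _ _))
        (Finset.prod_pos fun k _ => hh_pos _ _)
    have hGint : Integrable G :=
      integrable_of_prod_factor S hQid hqint (fun u => (hh_pos j u).ne')
    exact core ht S (hh_int j) (hh_pos j) hGint hGpos hQid z i hij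
  · -- case i ∈ B
    intro hiB
    set ext : ({a : Fin n // a ∉ B} → ℝ) → (Fin n → ℝ) :=
      fun w a => if hx : a ∉ B then w ⟨a, hx⟩ else 0 with hext
    set G : ({a : Fin n // a ∉ B} → ℝ) → ℝ := fun w =>
      (∏ k ∈ 𝒥, f k (fun i' : {a // a ∈ M k} => ext w i'.1)) *
      ∏ k ∈ 𝒥ᶜ, h k (fun i' : {a // a ∈ M k} => ext w i'.1) with hG
    have hmask : ∀ (zz : Fin n → ℝ) (T : Finset (Fin n)), (∀ a ∈ T, a ∉ B) →
        (fun i' : {a // a ∈ T} => ext (fun i'' : {a : Fin n // a ∉ B} => zz i''.1) i'.1)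
          = fun i' : {a // a ∈ T} => zz i'.1 := by
      intro zz T hT
      funext i'
      simp only [hext]
      rw [dif_pos (hT i'.1 i'.2)]
    have hQid : ∀ zz : Fin n → ℝ, q 𝒥 zz
        = g (fun i' : {a // a ∈ B} => zz i'.1)
          * G (fun i' : {a : Fin n // a ∉ B} => zz i'.1) := by
      intro zz
      have hGval : G (fun i' : {a : Fin n // a ∉ B} => zz i'.1)
          = (∏ k ∈ 𝒥, f k (fun i' : {a // a ∈ M k} => zz i'.1)) *
            ∏ k ∈ 𝒥ᶜ, h k (fun i' : {a // a ∈ M k} => zz i'.1) := by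
        simp only [hG]
        congr 1
        · exact Finset.prod_congr rfl fun k hk =>
            congrArg (f k) (hmask zz (M k) (fun a haM => hMB k a haM))
        · exact Finset.prod_congr rfl fun k hk =>
            congrArg (h k) (hmask zz (M k) (fun a haM => hMB k a haM))
      rw [hq_prod 𝒥 zz, hGval]
      ring
    have hGpos : ∀ v, 0 < G v := fun v =>
      mul_pos (Finset.prod_pos fun k _ => hf_pos _ _)
        (Finset.prod_pos fun k _ => hh_pos _ _)
    have hGint : Integrable G :=
      integrable_of_prod_factor B hQid hqint (fun u => (hg_pos u).ne')
    exact core ht B hg_int hg_pos hGint hGpos hQid z i hiB
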